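/- Let f be convex on an interval I ⊆ ℝ, x₁ ≤ x₂ ≤ ... ≤ xₙ points of I, p a real n-tuple with partial sums Pᵢ = ∑_{j≤i} pⱼ satisfying 0 ≤ Pᵢ ≤ 1 and Pₙ = 1, and q an n-tuple with partial sums Qᵢ = ∑_{j≤i} qⱼ satisfying 0 < Qᵢ < 1 for i < n and Qₙ = 1. Define mᵢ = Pᵢ/Qᵢ, m̄ᵢ = (1−P_{i−1})/(1−Q_{i−1}), m* = min over all these ratios, M* = max over all these ratios. Then M*·(∑qᵢf(xᵢ) − f(∑qᵢxᵢ)) ≥ ∑pᵢf(xᵢ) − f(∑pᵢxᵢ) ≥ m*·(∑qᵢf(xᵢ) − f(∑qᵢxᵢ)). -/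

import Mathlib

open Finset

lemma tele_sum (F : ℕ → ℝ) {m n : ℕ} (h : m ≤ n) :
    ∑ j ∈ Finset.Ico m n, (F (j+1) - F j) = F n - F m := by
  induction n with
  | zero => interval_cases m; simp
  | succ n ih =>
    rcases Nat.lt_or_ge m (n+1) with h' | h'
    · have hmn : m ≤ n := by omega
      rw [Finset.sum_Ico_succ_top hmn, ih hmn]; ring
    · have : m = n + 1 := by omega
      subst this; simp

lemma steffensen_core {N : ℕ} (x w : ℕ → ℝ) (g : ℝ → ℝ) (y : ℝ)
    (hmono : ∀ ⦃i j⦄, i ≤ j → j < N → x i ≤ x j)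
    (hPs : ∀ j < N, 0 ≤ ∑ i ∈ range (j+1), w i)
    (hTs : ∀ j < N, 0 ≤ ∑ i ∈ Ico j N, w i)
    (hl : ∀ j, j+1 < N → x (j+1) < y → g (x (j+1)) ≤ g (x j))
    (hr : ∀ j, j+1 < N → y ≤ x j → g (x j) ≤ g (x (j+1)))
    (hy : ∀ j < N, g y ≤ g (x j)) :
    (∑ i ∈ range N, w i) * g y ≤ ∑ i ∈ range N, w i * g (x i) := by
  set k := ((range N).filter (fun i => x i < y)).card with hkdef
  have hkN : k ≤ N := le_trans (card_filter_le _ _) (by simp)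
  have hk1 : ∀ i, i < k → x i < y := by
    intro i hi
    by_contra h
    push_neg at h
    have hsub : ((range N).filter (fun i => x i < y)) ⊆ range i := by
      intro j hj
      simp only [mem_filter, mem_range] at hj
      rcases lt_or_ge j i with h' | h'
      · exact mem_range.2 h'
      · exact absurd (lt_of_lt_of_le hj.2 (h.trans (hmono h' hj.1))) (lt_irrefl _)
    have := card_le_card hsub
    simp only [card_range] at this
    omega
  have hk2 : ∀ i, k ≤ i → i < N → y ≤ x i := by
    intro i h1 h2
    by_contra h
    push_neg at h
    have hsub : range (i+1) ⊆ (range N).filter (fun i => x i < y) := by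
      intro j hj
      simp only [mem_range] at hj
      have hjN : j < N := by omega
      exact mem_filter.2 ⟨mem_range.2 hjN, lt_of_le_of_lt (hmono (by omega) h2) h⟩
    have := card_le_card hsub
    simp only [card_range] at this
    omega
  have key : 0 ≤ ∑ i ∈ range N, w i * (g (x i) - g y) := by
    rw [range_eq_Ico, ← sum_Ico_consecutive _ (Nat.zero_le k) hkN]
    have hL : 0 ≤ ∑ i ∈ Ico 0 k, w i * (g (x i) - g y) := by
      set X : ℕ → ℝ := fun j => if j < k then g (x j) else g y with hX
      have htel : ∀ i ∈ Ico 0 k, w i * (g (x i) - g y)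
          = ∑ j ∈ Ico 0 k, (if i ≤ j then w i * (X j - X (j+1)) else 0) := by
        intro i hi
        simp only [mem_Ico] at hi
        rw [← sum_filter]
        have hfil : (Ico 0 k).filter (fun j => i ≤ j) = Ico i k := by
          ext j; simp only [mem_filter, mem_Ico]; omega
        rw [hfil, ← mul_sum]
        congr 1
        have : ∑ j ∈ Ico i k, (X j - X (j+1)) = -∑ j ∈ Ico i k, (X (j+1) - X j) := by
          rw [← sum_neg_distrib]; congr 1; ext j; ring
        rw [this, tele_sum X (le_of_lt hi.2)]
        simp only [hX]
        rw [if_pos hi.2, if_neg (lt_irrefl k)]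
        ring
      rw [sum_congr rfl htel, sum_comm]
      apply sum_nonneg
      intro j hj
      simp only [mem_Ico] at hj
      have hjk := hj.2
      have hsum : ∑ i ∈ Ico 0 k, (if i ≤ j then w i * (X j - X (j+1)) else 0)
          = (∑ i ∈ range (j+1), w i) * (X j - X (j+1)) := by
        rw [← sum_filter]
        have : (Ico 0 k).filter (fun i => i ≤ j) = range (j+1) := by
          ext i; simp only [mem_filter, mem_Ico, mem_range]; omega
        rw [this, sum_mul]
      rw [hsum]
      apply mul_nonneg (hPs j (by omega))
      have hXj : X j = g (x j) := if_pos hjk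
      rcases lt_or_ge (j+1) k with h' | h'
      · have : X (j+1) = g (x (j+1)) := if_pos h'
        rw [hXj, this, sub_nonneg]
        exact hl j (by omega) (hk1 _ h')
      · have : X (j+1) = g y := if_neg (by omega)
        rw [hXj, this, sub_nonneg]
        exact hy j (by omega)
    have hR : 0 ≤ ∑ i ∈ Ico k N, w i * (g (x i) - g y) := by
      set Z : ℕ → ℝ := fun j => if j ≤ k then g y else g (x (j-1)) with hZ
      have htel : ∀ i ∈ Ico k N, w i * (g (x i) - g y)
          = ∑ j ∈ Ico k N, (if j ≤ i then w i * (Z (j+1) - Z j) else 0) := by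
        intro i hi
        simp only [mem_Ico] at hi
        rw [← sum_filter]
        have hfil : (Ico k N).filter (fun j => j ≤ i) = Ico k (i+1) := by
          ext j; simp only [mem_filter, mem_Ico]; omega
        rw [hfil, ← mul_sum, tele_sum Z (show k ≤ i+1 by omega)]
        congr 1
        simp only [hZ]
        rw [if_neg (by omega), if_pos (le_refl k)]
        simp
      rw [sum_congr rfl htel, sum_comm]
      apply sum_nonneg
      intro j hj
      simp only [mem_Ico] at hj
      have hsum : ∑ i ∈ Ico k N, (if j ≤ i then w i * (Z (j+1) - Z j) else 0)
          = (∑ i ∈ Ico j N, w i) * (Z (j+1) - Z j) := by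
        rw [← sum_filter]
        have : (Ico k N).filter (fun i => j ≤ i) = Ico j N := by
          ext i; simp only [mem_filter, mem_Ico]; omega
        rw [this, sum_mul]
      rw [hsum]
      apply mul_nonneg (hTs j (by omega))
      rcases eq_or_lt_of_le hj.1 with h' | h'
      · have h1 : Z (j+1) = g (x j) := by
          simp only [hZ]; rw [if_neg (by omega)]; simp
        have h2 : Z j = g y := if_pos (le_of_eq h'.symm)
        rw [h1, h2, sub_nonneg]
        exact hy j hj.2
      · have h1 : Z (j+1) = g (x j) := by
          simp only [hZ]; rw [if_neg (by omega)]; simp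
        have h2 : Z j = g (x (j-1)) := by
          simp only [hZ]; rw [if_neg (by omega)]
        rw [h1, h2, sub_nonneg]
        have := hr (j-1) (by omega) (hk2 (j-1) (by omega) (by omega))
        have hj1 : j - 1 + 1 = j := by omega
        rwa [hj1] at this
    linarith
  have expand : ∑ i ∈ range N, w i * (g (x i) - g y)
      = ∑ i ∈ range N, w i * g (x i) - (∑ i ∈ range N, w i) * g y := by
    rw [sum_mul]
    rw [← sum_sub_distrib]
    congr 1; ext i; ring
  linarith [key, expand ▸ key]

lemma valley_exists {I : Set ℝ} {f : ℝ → ℝ} (hf : ConvexOn ℝ I f)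
    (pts : Finset ℝ) (hpts : ∀ t ∈ pts, t ∈ I) {a : ℝ} (ha : a ∈ I) :
    ∃ c : ℝ,
      (∀ s ∈ pts, ∀ t ∈ pts, s ≤ t → t ≤ a → f t - c * t ≤ f s - c * s) ∧
      (∀ s ∈ pts, ∀ t ∈ pts, s ≤ t → a ≤ s → f s - c * s ≤ f t - c * t) ∧
      (∀ t ∈ pts, f a - c * a ≤ f t - c * t) := by
  classical
  set L : Finset ℝ := (pts.filter (· < a)).image (fun t => (f a - f t) / (a - t)) with hL
  set R : Finset ℝ := (pts.filter (a < ·)).image (fun t => (f t - f a) / (t - a)) with hR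
  -- cross inequality
  have cross : ∀ t ∈ pts, t < a → ∀ u ∈ pts, a < u →
      (f a - f t) / (a - t) ≤ (f u - f a) / (u - a) :=
    fun t ht hta u hu hau => hf.slope_mono_adjacent (hpts t ht) (hpts u hu) hta hau
  set c : ℝ := if hLne : L.Nonempty then L.max' hLne
    else if hRne : R.Nonempty then R.min' hRne else 0 with hc
  -- key bounds
  have hcL : ∀ t ∈ pts, t < a → (f a - f t) / (a - t) ≤ c := by
    intro t ht hta
    have hmem : (f a - f t) / (a - t) ∈ L := mem_image.2 ⟨t, mem_filter.2 ⟨ht, hta⟩, rfl⟩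
    have hLne : L.Nonempty := ⟨_, hmem⟩
    rw [hc, dif_pos hLne]
    exact le_max' _ _ hmem
  have hcR : ∀ u ∈ pts, a < u → c ≤ (f u - f a) / (u - a) := by
    intro u hu hau
    have hmem : (f u - f a) / (u - a) ∈ R := mem_image.2 ⟨u, mem_filter.2 ⟨hu, hau⟩, rfl⟩
    have hRne : R.Nonempty := ⟨_, hmem⟩
    rw [hc]
    by_cases hLne : L.Nonempty
    · rw [dif_pos hLne]
      obtain ⟨t, htmem, hteq⟩ := mem_image.1 (L.max'_mem hLne)
      obtain ⟨ht, hta⟩ := mem_filter.1 htmem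
      rw [← hteq]
      exact cross t ht hta u hu hau
    · rw [dif_neg hLne, dif_pos hRne]
      exact min'_le _ _ hmem
  -- slope lower bound translations
  have slope_le : ∀ t ∈ I, t < a → (f a - f t) / (a - t) ≤ c → f a - c * a ≤ f t - c * t := by
    intro t _ hta h
    rw [div_le_iff₀ (by linarith)] at h
    nlinarith
  have slope_ge : ∀ u ∈ I, a < u → c ≤ (f u - f a) / (u - a) → f a - c * a ≤ f u - c * u := by
    intro u _ hau h
    rw [le_div_iff₀ (by linarith)] at h
    nlinarith
  refine ⟨c, ?_, ?_, ?_⟩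
  · intro s hs t ht hst hta
    rcases eq_or_lt_of_le hst with h | hst'
    · subst h; exact le_refl _
    rcases eq_or_lt_of_le hta with h | hta'
    · subst h
      have := hcL s hs hst'
      rw [div_le_iff₀ (by linarith)] at this
      nlinarith
    · -- s < t < a : slope(s,t) ≤ slope(t,a) ≤ c
      have h1 : (f t - f s) / (t - s) ≤ (f a - f t) / (a - t) :=
        hf.slope_mono_adjacent (hpts s hs) ha hst' hta'
      have h2 := hcL t ht hta'
      have : (f t - f s) / (t - s) ≤ c := h1.trans h2
      rw [div_le_iff₀ (by linarith)] at this
      nlinarith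
  · intro s hs t ht hst has
    rcases eq_or_lt_of_le hst with h | hst'
    · subst h; exact le_refl _
    rcases eq_or_lt_of_le has with h | has'
    · subst h
      have := hcR t ht hst'
      rw [le_div_iff₀ (by linarith)] at this
      nlinarith
    · have h1 : (f s - f a) / (s - a) ≤ (f t - f s) / (t - s) :=
        hf.slope_mono_adjacent ha (hpts t ht) has' hst'
      have h2 := hcR s hs has'
      have : c ≤ (f t - f s) / (t - s) := h2.trans h1
      rw [le_div_iff₀ (by linarith)] at this
      nlinarith
  · intro t ht
    rcases lt_trichotomy t a with h | h | h
    · exact slope_le t (hpts t ht) h (hcL t ht h)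
    · subst h; exact le_refl _
    · exact slope_ge t (hpts t ht) h (hcR t ht h)

theorem stmt1 {I : Set ℝ} {f : ℝ → ℝ} (hf : ConvexOn ℝ I f)
    {n : ℕ} (hn : 0 < n) (x : Fin n → ℝ) (hx : ∀ i, x i ∈ I) (hmono : Monotone x)
    (p q : Fin n → ℝ)
    (P Q Tp Tq : Fin n → ℝ)
    (hP : ∀ i, P i = ∑ j, if j ≤ i then p j else 0)
    (hQ : ∀ i, Q i = ∑ j, if j ≤ i then q j else 0)
    (hTp : ∀ i, Tp i = ∑ j, if i ≤ j then p j else 0)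
    (hTq : ∀ i, Tq i = ∑ j, if i ≤ j then q j else 0)
    (hP01 : ∀ i, 0 ≤ P i ∧ P i ≤ 1) (hPn : ∑ i, p i = 1)
    (hQ01 : ∀ i : Fin n, (i : ℕ) < n - 1 → 0 < Q i ∧ Q i < 1) (hQn : ∑ i, q i = 1)
    (mstar Mstar : ℝ)
    (hm : IsLeast ((Set.range fun i => P i / Q i) ∪ (Set.range fun i => Tp i / Tq i)) mstar)
    (hM : IsGreatest ((Set.range fun i => P i / Q i) ∪ (Set.range fun i => Tp i / Tq i)) Mstar) :
    Mstar * (∑ i, q i * f (x i) - f (∑ i, q i * x i)) ≥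
        ∑ i, p i * f (x i) - f (∑ i, p i * x i) ∧
    ∑ i, p i * f (x i) - f (∑ i, p i * x i) ≥
        mstar * (∑ i, q i * f (x i) - f (∑ i, q i * x i)) := by
  classical
  have hn1 : n - 1 < n := by omega
  let xx : ℕ → ℝ := fun i => x ⟨min i (n-1), by omega⟩
  let pp : ℕ → ℝ := fun i => if h : i < n then p ⟨i, h⟩ else 0
  let qq : ℕ → ℝ := fun i => if h : i < n then q ⟨i, h⟩ else 0
  have hxxi : ∀ i : Fin n, xx i.val = x i := by
    intro i
    show x ⟨min i.val (n-1), _⟩ = x i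
    congr 1
    exact Fin.ext (by simp; omega)
  have hppi : ∀ i : Fin n, pp i.val = p i := by
    intro i; show (if h : i.val < n then p ⟨i.val, h⟩ else 0) = p i
    rw [dif_pos i.isLt]
  have hqqi : ∀ i : Fin n, qq i.val = q i := by
    intro i; show (if h : i.val < n then q ⟨i.val, h⟩ else 0) = q i
    rw [dif_pos i.isLt]
  have hxmono : ∀ ⦃i j : ℕ⦄, i ≤ j → j < n → xx i ≤ xx j := by
    intro i j hij _
    exact hmono (show (⟨min i (n-1), by omega⟩ : Fin n) ≤ ⟨min j (n-1), by omega⟩ by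
      simp [Fin.le_def]; omega)
  have hxI : ∀ i : ℕ, xx i ∈ I := fun i => hx _
  -- abbreviations (plain defs to keep syntactic control)
  have hA : ∑ i, p i * f (x i) = ∑ i ∈ range n, pp i * f (xx i) := by
    rw [← Fin.sum_univ_eq_sum_range (fun i => pp i * f (xx i)) n]
    exact Finset.sum_congr rfl (fun i _ => by rw [hppi, hxxi])
  have ha : ∑ i, p i * x i = ∑ i ∈ range n, pp i * xx i := by
    rw [← Fin.sum_univ_eq_sum_range (fun i => pp i * xx i) n]
    exact Finset.sum_congr rfl (fun i _ => by rw [hppi, hxxi])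
  have hB : ∑ i, q i * f (x i) = ∑ i ∈ range n, qq i * f (xx i) := by
    rw [← Fin.sum_univ_eq_sum_range (fun i => qq i * f (xx i)) n]
    exact Finset.sum_congr rfl (fun i _ => by rw [hqqi, hxxi])
  have hb : ∑ i, q i * x i = ∑ i ∈ range n, qq i * xx i := by
    rw [← Fin.sum_univ_eq_sum_range (fun i => qq i * xx i) n]
    exact Finset.sum_congr rfl (fun i _ => by rw [hqqi, hxxi])
  set A : ℝ := ∑ i ∈ range n, pp i * f (xx i) with hAdef
  set a : ℝ := ∑ i ∈ range n, pp i * xx i with hadef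
  set B : ℝ := ∑ i ∈ range n, qq i * f (xx i) with hBdef
  set b : ℝ := ∑ i ∈ range n, qq i * xx i with hbdef
  have hSPn : ∑ i ∈ range n, pp i = 1 := by
    rw [← Fin.sum_univ_eq_sum_range pp n, ← hPn]
    exact Finset.sum_congr rfl (fun i _ => hppi i)
  have hSQn : ∑ i ∈ range n, qq i = 1 := by
    rw [← Fin.sum_univ_eq_sum_range qq n, ← hQn]
    exact Finset.sum_congr rfl (fun i _ => hqqi i)
  -- partial sum identifications
  have hPval : ∀ i : Fin n, P i = ∑ j ∈ range (i.val + 1), pp j := by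
    intro i
    rw [hP i]
    have step : ∀ j : Fin n, (if j ≤ i then p j else 0)
        = (fun m => if m ≤ i.val then pp m else 0) j.val := by
      intro j; simp only [Fin.le_def, hppi]
    rw [Finset.sum_congr rfl (fun j _ => step j),
      Fin.sum_univ_eq_sum_range (fun m => if m ≤ i.val then pp m else 0) n,
      ← Finset.sum_filter]
    congr 1
    ext m; simp only [mem_filter, mem_range]
    have := i.isLt; omega
  have hQval : ∀ i : Fin n, Q i = ∑ j ∈ range (i.val + 1), qq j := by
    intro i
    rw [hQ i]
    have step : ∀ j : Fin n, (if j ≤ i then q j else 0)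
        = (fun m => if m ≤ i.val then qq m else 0) j.val := by
      intro j; simp only [Fin.le_def, hqqi]
    rw [Finset.sum_congr rfl (fun j _ => step j),
      Fin.sum_univ_eq_sum_range (fun m => if m ≤ i.val then qq m else 0) n,
      ← Finset.sum_filter]
    congr 1
    ext m; simp only [mem_filter, mem_range]
    have := i.isLt; omega
  have hTpval : ∀ i : Fin n, Tp i = ∑ j ∈ Ico i.val n, pp j := by
    intro i
    rw [hTp i]
    have step : ∀ j : Fin n, (if i ≤ j then p j else 0)
        = (fun m => if i.val ≤ m then pp m else 0) j.val := by
      intro j; simp only [Fin.le_def, hppi]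
    rw [Finset.sum_congr rfl (fun j _ => step j),
      Fin.sum_univ_eq_sum_range (fun m => if i.val ≤ m then pp m else 0) n,
      ← Finset.sum_filter]
    congr 1
    ext m; simp only [mem_filter, mem_range, mem_Ico]; omega
  have hTqval : ∀ i : Fin n, Tq i = ∑ j ∈ Ico i.val n, qq j := by
    intro i
    rw [hTq i]
    have step : ∀ j : Fin n, (if i ≤ j then q j else 0)
        = (fun m => if i.val ≤ m then qq m else 0) j.val := by
      intro j; simp only [Fin.le_def, hqqi]
    rw [Finset.sum_congr rfl (fun j _ => step j),
      Fin.sum_univ_eq_sum_range (fun m => if i.val ≤ m then qq m else 0) n,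
      ← Finset.sum_filter]
    congr 1
    ext m; simp only [mem_filter, mem_range, mem_Ico]; omega
  have hsplitP : ∀ j, j ≤ n → (∑ i ∈ range j, pp i) + ∑ i ∈ Ico j n, pp i = 1 := by
    intro j hj
    rw [← hSPn, range_eq_Ico, range_eq_Ico]
    exact sum_Ico_consecutive _ (Nat.zero_le j) hj
  have hsplitQ : ∀ j, j ≤ n → (∑ i ∈ range j, qq i) + ∑ i ∈ Ico j n, qq i = 1 := by
    intro j hj
    rw [← hSQn, range_eq_Ico, range_eq_Ico]
    exact sum_Ico_consecutive _ (Nat.zero_le j) hj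
  -- bounds on partial sums
  have hSPbnd : ∀ j, j ≤ n → 0 ≤ ∑ i ∈ range j, pp i ∧ ∑ i ∈ range j, pp i ≤ 1 := by
    intro j hj
    rcases Nat.eq_zero_or_pos j with h0 | h0
    · subst h0; simp
    · have hj1 : j - 1 < n := by omega
      have h := hP01 ⟨j-1, hj1⟩
      rw [hPval ⟨j-1, hj1⟩] at h
      have heq : j - 1 + 1 = j := by omega
      rwa [heq] at h
  have hSQpos : ∀ j, 1 ≤ j → j ≤ n → 0 < ∑ i ∈ range j, qq i := by
    intro j h1 hj
    rcases Nat.eq_or_lt_of_le hj with h | h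
    · subst h; rw [hSQn]; norm_num
    · have hj1 : j - 1 < n := by omega
      have hlt : j - 1 < n - 1 := by omega
      have hq := (hQ01 ⟨j-1, hj1⟩ hlt).1
      rw [hQval ⟨j-1, hj1⟩] at hq
      have heq : j - 1 + 1 = j := by omega
      rwa [heq] at hq
  have hSQlt1 : ∀ j, j < n → ∑ i ∈ range j, qq i < 1 := by
    intro j hj
    rcases Nat.eq_zero_or_pos j with h0 | h0
    · subst h0; simp
    · have hj1 : j - 1 < n := by omega
      have hlt : j - 1 < n - 1 := by omega
      have hq := (hQ01 ⟨j-1, hj1⟩ hlt).2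
      rw [hQval ⟨j-1, hj1⟩] at hq
      have heq : j - 1 + 1 = j := by omega
      rwa [heq] at hq
  have hTQpos : ∀ j, j < n → 0 < ∑ i ∈ Ico j n, qq i := by
    intro j hj
    have h1 := hsplitQ j (le_of_lt hj)
    have h2 := hSQlt1 j hj
    linarith
  -- ratio membership facts
  have hmem1 : ∀ i : Fin n, P i / Q i ∈
      ((Set.range fun i => P i / Q i) ∪ (Set.range fun i => Tp i / Tq i)) :=
    fun i => Set.mem_union_left _ ⟨i, rfl⟩
  have hmem2 : ∀ i : Fin n, Tp i / Tq i ∈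
      ((Set.range fun i => P i / Q i) ∪ (Set.range fun i => Tp i / Tq i)) :=
    fun i => Set.mem_union_right _ ⟨i, rfl⟩
  -- translated extremal inequalities
  have hmP : ∀ j, j < n →
      mstar * ∑ i ∈ range (j+1), qq i ≤ ∑ i ∈ range (j+1), pp i := by
    intro j hj
    have h1 := hm.2 (hmem1 ⟨j, hj⟩)
    rw [hPval ⟨j, hj⟩, hQval ⟨j, hj⟩] at h1
    exact (le_div_iff₀ (hSQpos (j+1) (by omega) hj)).1 h1
  have hmT : ∀ j, j < n →
      mstar * ∑ i ∈ Ico j n, qq i ≤ ∑ i ∈ Ico j n, pp i := by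
    intro j hj
    have h1 := hm.2 (hmem2 ⟨j, hj⟩)
    rw [hTpval ⟨j, hj⟩, hTqval ⟨j, hj⟩] at h1
    exact (le_div_iff₀ (hTQpos j hj)).1 h1
  have hMP : ∀ j, j < n →
      ∑ i ∈ range (j+1), pp i ≤ Mstar * ∑ i ∈ range (j+1), qq i := by
    intro j hj
    have h1 := hM.2 (hmem1 ⟨j, hj⟩)
    rw [hPval ⟨j, hj⟩, hQval ⟨j, hj⟩] at h1
    exact (div_le_iff₀ (hSQpos (j+1) (by omega) hj)).1 h1
  have hMT : ∀ j, j < n →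
      ∑ i ∈ Ico j n, pp i ≤ Mstar * ∑ i ∈ Ico j n, qq i := by
    intro j hj
    have h1 := hM.2 (hmem2 ⟨j, hj⟩)
    rw [hTpval ⟨j, hj⟩, hTqval ⟨j, hj⟩] at h1
    exact (div_le_iff₀ (hTQpos j hj)).1 h1
  have hmstar0 : 0 ≤ mstar := by
    rcases hm.1 with ⟨i, hi⟩ | ⟨i, hi⟩
    · have hi' : P i / Q i = mstar := hi
      rw [← hi', hPval i, hQval i]
      exact div_nonneg (hSPbnd (i.val+1) i.isLt).1 (hSQpos (i.val+1) (by omega) i.isLt).le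
    · have hi' : Tp i / Tq i = mstar := hi
      rw [← hi', hTpval i, hTqval i]
      have h1 := hsplitP i.val (le_of_lt i.isLt)
      have h2 := (hSPbnd i.val (le_of_lt i.isLt)).2
      exact div_nonneg (by linarith) (hTQpos i.val i.isLt).le
  -- partial/tail sum conditions for pp and qq
  have hppPs : ∀ j, j < n → 0 ≤ ∑ i ∈ range (j+1), pp i :=
    fun j hj => (hSPbnd (j+1) hj).1
  have hppTs : ∀ j, j < n → 0 ≤ ∑ i ∈ Ico j n, pp i := by
    intro j hj
    have h1 := hsplitP j (le_of_lt hj)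
    have h2 := (hSPbnd j (le_of_lt hj)).2
    linarith
  have hqqPs : ∀ j, j < n → 0 ≤ ∑ i ∈ range (j+1), qq i :=
    fun j hj => (hSQpos (j+1) (by omega) hj).le
  have hqqTs : ∀ j, j < n → 0 ≤ ∑ i ∈ Ico j n, qq i :=
    fun j hj => (hTQpos j hj).le
  -- bounds on a and b
  have hax0 : xx 0 ≤ a := by
    have h0 := steffensen_core (N := n) xx pp (fun t => t) (xx 0) hxmono hppPs hppTs
      (fun j hj hlt => absurd hlt (not_lt.2 (hxmono (Nat.zero_le _) hj)))
      (fun j hj _ => hxmono (Nat.le_succ j) hj)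
      (fun j hj => hxmono (Nat.zero_le _) hj)
    have h1 : (∑ i ∈ range n, pp i) * xx 0 ≤ ∑ i ∈ range n, pp i * xx i := h0
    rw [hSPn, one_mul] at h1
    exact h1
  have haxn : a ≤ xx (n-1) := by
    have h0 := steffensen_core (N := n) xx pp (fun t => -t) (xx (n-1)) hxmono hppPs hppTs
      (fun j hj _ => neg_le_neg (hxmono (by omega) hj))
      (fun j hj hge => neg_le_neg (le_trans (hxmono (by omega) (by omega)) hge))
      (fun j hj => neg_le_neg (hxmono (show j ≤ n-1 by omega) hn1))
    have h1 : (∑ i ∈ range n, pp i) * -xx (n-1) ≤ ∑ i ∈ range n, pp i * -xx i := h0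
    have h2 : ∑ i ∈ range n, pp i * -xx i = -a := by
      rw [hadef, ← Finset.sum_neg_distrib]
      exact Finset.sum_congr rfl (fun i _ => by ring)
    rw [hSPn, one_mul, h2] at h1
    linarith
  have hbx0 : xx 0 ≤ b := by
    have h0 := steffensen_core (N := n) xx qq (fun t => t) (xx 0) hxmono hqqPs hqqTs
      (fun j hj hlt => absurd hlt (not_lt.2 (hxmono (Nat.zero_le _) hj)))
      (fun j hj _ => hxmono (Nat.le_succ j) hj)
      (fun j hj => hxmono (Nat.zero_le _) hj)
    have h1 : (∑ i ∈ range n, qq i) * xx 0 ≤ ∑ i ∈ range n, qq i * xx i := h0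
    rw [hSQn, one_mul] at h1
    exact h1
  have hbxn : b ≤ xx (n-1) := by
    have h0 := steffensen_core (N := n) xx qq (fun t => -t) (xx (n-1)) hxmono hqqPs hqqTs
      (fun j hj _ => neg_le_neg (hxmono (by omega) hj))
      (fun j hj hge => neg_le_neg (le_trans (hxmono (by omega) (by omega)) hge))
      (fun j hj => neg_le_neg (hxmono (show j ≤ n-1 by omega) hn1))
    have h1 : (∑ i ∈ range n, qq i) * -xx (n-1) ≤ ∑ i ∈ range n, qq i * -xx i := h0
    have h2 : ∑ i ∈ range n, qq i * -xx i = -b := by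
      rw [hbdef, ← Finset.sum_neg_distrib]
      exact Finset.sum_congr rfl (fun i _ => by ring)
    rw [hSQn, one_mul, h2] at h1
    linarith
  have hIcc : Set.Icc (xx 0) (xx (n-1)) ⊆ I := (hf.1.ordConnected).out (hxI 0) (hxI (n-1))
  have haI : a ∈ I := hIcc ⟨hax0, haxn⟩
  have hbI : b ∈ I := hIcc ⟨hbx0, hbxn⟩
  constructor
  · -- Mstar side
    have hptsmem : ∀ t ∈ ((range n).image xx ∪ {a} : Finset ℝ), t ∈ I := by
      intro t ht
      rcases Finset.mem_union.1 ht with h | h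
      · obtain ⟨i, _, rfl⟩ := Finset.mem_image.1 h
        exact hxI i
      · rw [Finset.mem_singleton.1 h]; exact haI
    obtain ⟨c, hc1, hc2, hc3⟩ := valley_exists hf _ hptsmem hbI
    have hxxpts : ∀ j, j < n → xx j ∈ ((range n).image xx ∪ {a} : Finset ℝ) :=
      fun j hj => Finset.mem_union_left _ (Finset.mem_image.2 ⟨j, Finset.mem_range.2 hj, rfl⟩)
    have hapts : a ∈ ((range n).image xx ∪ {a} : Finset ℝ) :=
      Finset.mem_union_right _ (Finset.mem_singleton_self a)
    have hwPs : ∀ j, j < n → 0 ≤ ∑ i ∈ range (j+1), (Mstar * qq i - pp i) := by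
      intro j hj
      rw [Finset.sum_sub_distrib, ← Finset.mul_sum]
      have := hMP j hj
      linarith
    have hwTs : ∀ j, j < n → 0 ≤ ∑ i ∈ Ico j n, (Mstar * qq i - pp i) := by
      intro j hj
      rw [Finset.sum_sub_distrib, ← Finset.mul_sum]
      have := hMT j hj
      linarith
    have hcore := steffensen_core (N := n) xx (fun i => Mstar * qq i - pp i)
      (fun t => f t - c * t) b hxmono hwPs hwTs
      (fun j hj hlt => hc1 (xx j) (hxxpts j (by omega)) (xx (j+1)) (hxxpts (j+1) hj)
        (hxmono (by omega) hj) hlt.le)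
      (fun j hj hge => hc2 (xx j) (hxxpts j (by omega)) (xx (j+1)) (hxxpts (j+1) hj)
        (hxmono (by omega) hj) hge)
      (fun j hj => hc3 (xx j) (hxxpts j hj))
    have hc' : (∑ i ∈ range n, (Mstar * qq i - pp i)) * (f b - c * b)
        ≤ ∑ i ∈ range n, (Mstar * qq i - pp i) * (f (xx i) - c * xx i) := hcore
    have hsum1 : ∑ i ∈ range n, (Mstar * qq i - pp i) = Mstar - 1 := by
      rw [Finset.sum_sub_distrib, ← Finset.mul_sum, hSQn, hSPn]; ring
    have hsum2 : ∑ i ∈ range n, (Mstar * qq i - pp i) * (f (xx i) - c * xx i)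
        = Mstar * B - A - c * (Mstar * b - a) := by
      have e : ∀ i ∈ range n, (Mstar * qq i - pp i) * (f (xx i) - c * xx i)
          = Mstar * (qq i * f (xx i)) - pp i * f (xx i)
            - c * (Mstar * (qq i * xx i)) + c * (pp i * xx i) := by
        intro i _; ring
      rw [Finset.sum_congr rfl e]
      simp only [Finset.sum_add_distrib, Finset.sum_sub_distrib, ← Finset.mul_sum]
      rw [hAdef, hBdef, hadef, hbdef]
      ring
    rw [hsum1, hsum2] at hc'
    have hba : f b - c * b ≤ f a - c * a := hc3 a hapts
    rw [hA, hB, ha, hb]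
    nlinarith [hc', hba]
  · -- mstar side
    have hptsmem : ∀ t ∈ ((range n).image xx ∪ {b} : Finset ℝ), t ∈ I := by
      intro t ht
      rcases Finset.mem_union.1 ht with h | h
      · obtain ⟨i, _, rfl⟩ := Finset.mem_image.1 h
        exact hxI i
      · rw [Finset.mem_singleton.1 h]; exact hbI
    obtain ⟨c, hc1, hc2, hc3⟩ := valley_exists hf _ hptsmem haI
    have hxxpts : ∀ j, j < n → xx j ∈ ((range n).image xx ∪ {b} : Finset ℝ) :=
      fun j hj => Finset.mem_union_left _ (Finset.mem_image.2 ⟨j, Finset.mem_range.2 hj, rfl⟩)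
    have hbpts : b ∈ ((range n).image xx ∪ {b} : Finset ℝ) :=
      Finset.mem_union_right _ (Finset.mem_singleton_self b)
    have hwPs : ∀ j, j < n → 0 ≤ ∑ i ∈ range (j+1), (pp i - mstar * qq i) := by
      intro j hj
      rw [Finset.sum_sub_distrib, ← Finset.mul_sum]
      have := hmP j hj
      linarith
    have hwTs : ∀ j, j < n → 0 ≤ ∑ i ∈ Ico j n, (pp i - mstar * qq i) := by
      intro j hj
      rw [Finset.sum_sub_distrib, ← Finset.mul_sum]
      have := hmT j hj
      linarith
    have hcore := steffensen_core (N := n) xx (fun i => pp i - mstar * qq i)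
      (fun t => f t - c * t) a hxmono hwPs hwTs
      (fun j hj hlt => hc1 (xx j) (hxxpts j (by omega)) (xx (j+1)) (hxxpts (j+1) hj)
        (hxmono (by omega) hj) hlt.le)
      (fun j hj hge => hc2 (xx j) (hxxpts j (by omega)) (xx (j+1)) (hxxpts (j+1) hj)
        (hxmono (by omega) hj) hge)
      (fun j hj => hc3 (xx j) (hxxpts j hj))
    have hc' : (∑ i ∈ range n, (pp i - mstar * qq i)) * (f a - c * a)
        ≤ ∑ i ∈ range n, (pp i - mstar * qq i) * (f (xx i) - c * xx i) := hcore
    have hsum1 : ∑ i ∈ range n, (pp i - mstar * qq i) = 1 - mstar := by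
      rw [Finset.sum_sub_distrib, ← Finset.mul_sum, hSQn, hSPn]; ring
    have hsum2 : ∑ i ∈ range n, (pp i - mstar * qq i) * (f (xx i) - c * xx i)
        = A - mstar * B - c * (a - mstar * b) := by
      have e : ∀ i ∈ range n, (pp i - mstar * qq i) * (f (xx i) - c * xx i)
          = pp i * f (xx i) - mstar * (qq i * f (xx i))
            - c * (pp i * xx i) + c * (mstar * (qq i * xx i)) := by
        intro i _; ring
      rw [Finset.sum_congr rfl e]
      simp only [Finset.sum_add_distrib, Finset.sum_sub_distrib, ← Finset.mul_sum]
      rw [hAdef, hBdef, hadef, hbdef]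
      ring
    rw [hsum1, hsum2] at hc'
    have hab : f a - c * a ≤ f b - c * b := hc3 b hbpts
    have hmul := mul_le_mul_of_nonneg_left hab hmstar0
    rw [hA, hB, ha, hb]
    nlinarith [hc', hab, hmul]
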